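/- Let V be a finite-dimensional complex inner product space and φ : V → V self-adjoint. Let μ, ν ∈ spec(φ) with μ < ν, and let u ∈ V_μ∖{0}, w ∈ V_ν∖{0}. Then the point z = [u + w] ∈ ℙ(V) satisfies lim_{t→−∞} Φ(t,z) = [u] and lim_{t→+∞} Φ(t,z) = [w]. In particular W⁻([u]) ∩ W⁺([w]) ≠ ∅, so any two fixed-point components ℙ(V_μ), ℙ(V_ν) of the projective flow are comparable in the Smale order, the order on components being anti-isomorphic to the natural order on spec(φ). -/

import Mathlib

open scoped LinearAlgebra.Projectivization
open Filter

variable {V : Type*} [NormedAddCommGroup V] [InnerProductSpace ℂ V] [FiniteDimensional ℂ V]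

/-- The quotient topology on complex projective space. -/
noncomputable instance instTopPV : TopologicalSpace (ℙ ℂ V) :=
  @instTopologicalSpaceQuotient _ (projectivizationSetoid ℂ V) _

theorem exp_toLinearMap_injective (ψ : V →L[ℂ] V) :
    Function.Injective (NormedSpace.exp ψ).toLinearMap := by
  letI : NormedAlgebra ℚ (V →L[ℂ] V) := NormedAlgebra.restrictScalars ℚ ℝ (V →L[ℂ] V)
  obtain ⟨u, hu⟩ := NormedSpace.isUnit_exp ψ
  intro a b hab
  have h2 : (↑u⁻¹ * ↑u : V →L[ℂ] V) a = (↑u⁻¹ * ↑u : V →L[ℂ] V) b := by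
    simp only [ContinuousLinearMap.mul_apply]
    rw [hu]
    exact congrArg _ hab
  simpa [u.inv_mul] using h2

/-- The projective flow generated by a linear map `φ`: `Φ(t, [v]) = [e^{tφ} v]`. -/
noncomputable def projFlow (φ : V →ₗ[ℂ] V) (t : ℝ) : ℙ ℂ V → ℙ ℂ V :=
  Projectivization.map
    (NormedSpace.exp (t • LinearMap.toContinuousLinearMap φ)).toLinearMap
    (exp_toLinearMap_injective _)

-- aux : exp applied to eigenvector
lemma exp_clm_apply_eigen (ψ : V →L[ℂ] V) (z : ℂ) (v : V) (h : ψ v = z • v) :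
    NormedSpace.exp ψ v = Complex.exp z • v := by
  have hpow : ∀ n : ℕ, (ψ ^ n) v = z ^ n • v := by
    intro n
    induction n with
    | zero => simp
    | succ n ih =>
        rw [pow_succ, pow_succ, ContinuousLinearMap.mul_apply, h, map_smul, ih,
          smul_smul, mul_comm]
  have hs1 : HasSum (fun n : ℕ => ((n.factorial : ℝ)⁻¹) • ψ ^ n) (NormedSpace.exp ψ) :=
    NormedSpace.exp_series_hasSum_exp' ψ
  have hs2 : HasSum (fun n : ℕ => (((n.factorial : ℝ)⁻¹) • ψ ^ n) v) (NormedSpace.exp ψ v) :=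
    hs1.mapL (ContinuousLinearMap.apply ℂ V v)
  have hs3 : HasSum (fun n : ℕ => ((n.factorial : ℂ)⁻¹) • z ^ n) (Complex.exp z) := by
    rw [Complex.exp_eq_exp_ℂ]
    exact NormedSpace.exp_series_hasSum_exp' z
  have hs4 : HasSum (fun n : ℕ => (((n.factorial : ℂ)⁻¹) • z ^ n) • v) (Complex.exp z • v) :=
    hs3.smul_const v
  refine hs2.unique ?_
  convert hs4 using 2 with n
  rw [ContinuousLinearMap.smul_apply, hpow, smul_eq_mul, mul_smul,
    ← Complex.coe_smul]
  norm_num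

/-- For eigenvalues `μ < ν` of a self-adjoint `φ` and nonzero
eigenvectors `u ∈ V_μ`, `w ∈ V_ν`, the point `z = [u+w]` satisfies
`Φ(t,z) → [u]` as `t → −∞` and `Φ(t,z) → [w]` as `t → +∞`; in particular
`W⁻([u]) ∩ W⁺([w]) ≠ ∅`. -/
theorem projFlow_connecting_orbit
    {V : Type*} [NormedAddCommGroup V] [InnerProductSpace ℂ V] [FiniteDimensional ℂ V]
    (φ : V →ₗ[ℂ] V) (hφ : LinearMap.IsSymmetric φ)
    (μ ν : ℝ) (hμ : Module.End.HasEigenvalue φ (μ : ℂ))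
    (hν : Module.End.HasEigenvalue φ (ν : ℂ)) (hμν : μ < ν)
    (u : V) (hu : u ∈ Module.End.eigenspace φ (μ : ℂ)) (hu0 : u ≠ 0)
    (w : V) (hw : w ∈ Module.End.eigenspace φ (ν : ℂ)) (hw0 : w ≠ 0) :
    ∃ hz : u + w ≠ 0,
      Tendsto (fun t : ℝ => projFlow φ t (Projectivization.mk ℂ (u + w) hz)) atBot
        (nhds (Projectivization.mk ℂ u hu0)) ∧
      Tendsto (fun t : ℝ => projFlow φ t (Projectivization.mk ℂ (u + w) hz)) atTop
        (nhds (Projectivization.mk ℂ w hw0)) ∧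
      ({y : ℙ ℂ V | Tendsto (fun t : ℝ => projFlow φ t y) atBot
            (nhds (Projectivization.mk ℂ u hu0))} ∩
        {y : ℙ ℂ V | Tendsto (fun t : ℝ => projFlow φ t y) atTop
            (nhds (Projectivization.mk ℂ w hw0))}).Nonempty := by
  have hu' : φ u = (μ : ℂ) • u := Module.End.mem_eigenspace_iff.mp hu
  have hw' : φ w = (ν : ℂ) • w := Module.End.mem_eigenspace_iff.mp hw
  have hμνC : (ν : ℂ) - (μ : ℂ) ≠ 0 := by
    simp only [ne_eq, sub_eq_zero]
    exact_mod_cast hμν.ne'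
  -- linear independence style fact
  have key : ∀ a b : ℂ, a • u + b • w = 0 → a = 0 ∧ b = 0 := by
    intro a b hab
    have h1 : a • ((μ : ℂ) • u) + b • ((ν : ℂ) • w) = 0 := by
      have := congrArg φ hab
      simpa [hu', hw'] using this
    have h3 : (b * ((ν : ℂ) - μ)) • w = 0 := by
      calc (b * ((ν : ℂ) - μ)) • w
          = (a • ((μ : ℂ) • u) + b • ((ν : ℂ) • w)) - (μ : ℂ) • (a • u + b • w) := by
            module
        _ = 0 - (μ : ℂ) • (0 : V) := by rw [h1, hab]
        _ = 0 := by simp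
    have hb : b = 0 := by
      rcases smul_eq_zero.mp h3 with h | h
      · exact (mul_eq_zero.mp h).resolve_right hμνC
      · exact absurd h hw0
    refine ⟨?_, hb⟩
    rw [hb, zero_smul, add_zero] at hab
    rcases smul_eq_zero.mp hab with h | h
    · exact h
    · exact absurd h hu0
  have hz : u + w ≠ 0 := by
    intro h
    have := (key 1 1 (by simpa using h)).1
    norm_num at this
  have hne : ∀ c : ℂ, u + c • w ≠ 0 := by
    intro c h
    have := (key 1 c (by simpa using h)).1
    norm_num at this
  have hne' : ∀ c : ℂ, c • u + w ≠ 0 := by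
    intro c h
    have := (key c 1 (by simpa using h)).2
    norm_num at this
  -- action of the flow's linear map on eigenvectors
  have hψ : ∀ (t : ℝ) (z : ℂ) (v : V), φ v = z • v →
      (t • LinearMap.toContinuousLinearMap φ) v = ((t : ℂ) * z) • v := by
    intro t z v h
    rw [ContinuousLinearMap.smul_apply, LinearMap.coe_toContinuousLinearMap', h,
      mul_smul, ← Complex.coe_smul]
  have hexp : ∀ t : ℝ,
      NormedSpace.exp (t • LinearMap.toContinuousLinearMap φ) (u + w)
        = Complex.exp (t * μ) • u + Complex.exp (t * ν) • w := by
    intro t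
    rw [map_add, exp_clm_apply_eigen _ _ _ (hψ t _ u hu'),
      exp_clm_apply_eigen _ _ _ (hψ t _ w hw')]
  -- continuity of mk
  have hq : Continuous (Projectivization.mk' ℂ : { v : V // v ≠ 0 } → ℙ ℂ V) :=
    continuous_quotient_mk'
  -- the two normalized forms of the flow
  have hbot : ∀ t : ℝ, projFlow φ t (Projectivization.mk ℂ (u + w) hz)
      = Projectivization.mk ℂ (u + Complex.exp ((t : ℂ) * ((ν : ℂ) - μ)) • w)
          (hne _) := by
    intro t
    show Projectivization.map _ (exp_toLinearMap_injective _) _ = _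
    rw [Projectivization.map_mk]
    rw [Projectivization.mk_eq_mk_iff]
    refine ⟨Units.mk0 (Complex.exp (t * μ)) (Complex.exp_ne_zero _), ?_⟩
    rw [Units.smul_mk0, ContinuousLinearMap.coe_coe, hexp t, smul_add, smul_smul,
      ← Complex.exp_add]
    ring_nf
  have htop : ∀ t : ℝ, projFlow φ t (Projectivization.mk ℂ (u + w) hz)
      = Projectivization.mk ℂ (Complex.exp ((t : ℂ) * ((μ : ℂ) - ν)) • u + w)
          (hne' _) := by
    intro t
    show Projectivization.map _ (exp_toLinearMap_injective _) _ = _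
    rw [Projectivization.map_mk]
    rw [Projectivization.mk_eq_mk_iff]
    refine ⟨Units.mk0 (Complex.exp (t * ν)) (Complex.exp_ne_zero _), ?_⟩
    rw [Units.smul_mk0, ContinuousLinearMap.coe_coe, hexp t, smul_add, smul_smul,
      ← Complex.exp_add]
    ring_nf
  -- scalar limits
  have hcbot : Tendsto (fun t : ℝ => Complex.exp ((t : ℂ) * ((ν : ℂ) - μ)))
      atBot (nhds 0) := by
    have h1 : Tendsto (fun t : ℝ => t * (ν - μ)) atBot atBot :=
      tendsto_id.atBot_mul_const (sub_pos.mpr hμν)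
    have h2 : Tendsto (fun t : ℝ => Real.exp (t * (ν - μ))) atBot (nhds 0) :=
      Real.tendsto_exp_atBot.comp h1
    have h3 := (Complex.continuous_ofReal.tendsto 0).comp h2
    refine h3.congr fun t => ?_
    simp [Function.comp, Complex.ofReal_exp]
  have hctop : Tendsto (fun t : ℝ => Complex.exp ((t : ℂ) * ((μ : ℂ) - ν)))
      atTop (nhds 0) := by
    have h1 : Tendsto (fun t : ℝ => t * (μ - ν)) atTop atBot :=
      tendsto_id.atTop_mul_const_of_neg (sub_neg.mpr hμν)
    have h2 : Tendsto (fun t : ℝ => Real.exp (t * (μ - ν))) atTop (nhds 0) :=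
      Real.tendsto_exp_atBot.comp h1
    have h3 := (Complex.continuous_ofReal.tendsto 0).comp h2
    refine h3.congr fun t => ?_
    simp [Function.comp, Complex.ofReal_exp]
  -- vector limits
  have hvbot : Tendsto (fun t : ℝ => u + Complex.exp ((t : ℂ) * ((ν : ℂ) - μ)) • w)
      atBot (nhds u) := by
    have := tendsto_const_nhds (x := u) (f := atBot (α := ℝ)) |>.add
      (hcbot.smul_const w)
    simpa using this
  have hvtop : Tendsto (fun t : ℝ => Complex.exp ((t : ℂ) * ((μ : ℂ) - ν)) • u + w)
      atTop (nhds w) := by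
    have := (hctop.smul_const u).add (tendsto_const_nhds (x := w) (f := atTop (α := ℝ)))
    simpa using this
  -- lift to subtype then quotient
  have hsbot : Tendsto (fun t : ℝ =>
      (⟨u + Complex.exp ((t : ℂ) * ((ν : ℂ) - μ)) • w, hne _⟩ : { v : V // v ≠ 0 }))
      atBot (nhds ⟨u, hu0⟩) :=
    tendsto_subtype_rng.mpr hvbot
  have hstop : Tendsto (fun t : ℝ =>
      (⟨Complex.exp ((t : ℂ) * ((μ : ℂ) - ν)) • u + w, hne' _⟩ : { v : V // v ≠ 0 }))
      atTop (nhds ⟨w, hw0⟩) :=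
    tendsto_subtype_rng.mpr hvtop
  have hA : Tendsto (fun t : ℝ => projFlow φ t (Projectivization.mk ℂ (u + w) hz))
      atBot (nhds (Projectivization.mk ℂ u hu0)) := by
    have := (hq.tendsto _).comp hsbot
    refine Tendsto.congr (fun t => (hbot t).symm) this
  have hB : Tendsto (fun t : ℝ => projFlow φ t (Projectivization.mk ℂ (u + w) hz))
      atTop (nhds (Projectivization.mk ℂ w hw0)) := by
    have := (hq.tendsto _).comp hstop
    refine Tendsto.congr (fun t => (htop t).symm) this
  exact ⟨hz, hA, hB, ⟨Projectivization.mk ℂ (u + w) hz, hA, hB⟩⟩
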